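/- Let ρ(u) = √(u(4−u))/(2πu) for u ∈ (0,4] (the Marchenko–Pastur density), let L > 0, and define B(κ) = 1 − κ/2 + (κ/4)·log|1−κ| for 0 ≤ κ < 2 (κ ≠ 1) and B(κ) = 0 for κ ≥ 2. Then lim_{t→0⁺} (1/t)·( L − ∫₀⁴ L·ρ(u)·B( t/(2π·ρ(u)·L) ) du ) = 1/π. -/

import Mathlib

open MeasureTheory Real Filter

/-- The Marchenko–Pastur density `ρ(u) = √(u(4−u))/(2πu)` on `(0, 4]`. -/
noncomputable def rhoMP (u : ℝ) : ℝ :=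
  Real.sqrt (u * (4 - u)) / (2 * Real.pi * u)

/-- The GSE two-level form factor `B(κ)`:
`B(κ) = 1 − κ/2 + (κ/4) log|1−κ|` for `0 ≤ κ < 2`, and `B(κ) = 0` for `κ ≥ 2`. -/
noncomputable def Bgse (κ : ℝ) : ℝ :=
  if κ < 2 then 1 - κ / 2 + (κ / 4) * Real.log |1 - κ| else 0

open Set


theorem kwFTC {a : ℝ} (ha : 0 < a) :
    IntegrableOn (fun κ : ℝ => κ * ((a^2+κ^2)^2)⁻¹) (Ioi 0) ∧
      (∫ κ in Ioi (0:ℝ), κ * ((a^2+κ^2)^2)⁻¹) = 1/(2*a^2) := by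
  set F : ℝ → ℝ := fun κ => -(2*(a^2+κ^2))⁻¹ with hF
  have ha2 : a ≠ 0 := ne_of_gt ha
  have hderiv : ∀ κ ∈ Ici (0:ℝ), HasDerivAt F (κ * ((a^2+κ^2)^2)⁻¹) κ := by
    intro κ _
    have hd : 0 < a^2 + κ^2 := by positivity
    have d0 : HasDerivAt (fun κ : ℝ => a^2 + κ^2) (2*κ) κ := by
      simpa using (hasDerivAt_pow 2 κ).const_add (a^2)
    have h1 : HasDerivAt (fun κ : ℝ => -(2*(a^2+κ^2))⁻¹)
        (-(-(2*(2*κ)) * ((2*(a^2+κ^2))^2)⁻¹)) κ := ((d0.const_mul 2).inv (by positivity)).neg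
    convert h1 using 1
    field_simp
  have hpos : ∀ κ ∈ Ioi (0:ℝ), (0:ℝ) ≤ κ * ((a^2+κ^2)^2)⁻¹ := fun κ hκ => by
    have : 0 < κ := hκ; positivity
  have hlim : Tendsto F atTop (nhds 0) := by
    rw [hF]
    have hb : Tendsto (fun κ : ℝ => 2*(a^2+κ^2)) atTop atTop := by
      apply Tendsto.const_mul_atTop (by norm_num : (0:ℝ) < 2)
      exact tendsto_atTop_add_const_left _ _ (tendsto_pow_atTop two_ne_zero)
    simpa using (hb.inv_tendsto_atTop).neg
  refine ⟨integrableOn_Ioi_deriv_of_nonneg' hderiv hpos hlim, ?_⟩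
  rw [integral_Ioi_of_hasDerivAt_of_nonneg' hderiv hpos hlim]
  norm_num [hF]

theorem k2wFTC {a : ℝ} (ha : 0 < a) :
    IntegrableOn (fun κ : ℝ => κ^2 * ((a^2+κ^2)^2)⁻¹) (Ioi 0) ∧
      (∫ κ in Ioi (0:ℝ), κ^2 * ((a^2+κ^2)^2)⁻¹) = π/(4*a) := by
  set F : ℝ → ℝ := fun κ => arctan (κ/a)/(2*a) - κ/(2*(a^2+κ^2)) with hF
  have ha2 : a ≠ 0 := ne_of_gt ha
  have hderiv : ∀ κ ∈ Ici (0:ℝ), HasDerivAt F (κ^2 * ((a^2+κ^2)^2)⁻¹) κ := by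
    intro κ _
    have hd : 0 < a^2 + κ^2 := by positivity
    have d0 : HasDerivAt (fun κ : ℝ => a^2 + κ^2) (2*κ) κ := by
      simpa using (hasDerivAt_pow 2 κ).const_add (a^2)
    have h2 : HasDerivAt (fun κ : ℝ => arctan (κ/a)/(2*a))
        ((1/(1+(κ/a)^2) * (1/a))/(2*a)) κ :=
      (((hasDerivAt_arctan (κ/a)).comp κ ((hasDerivAt_id κ).div_const a))).div_const (2*a)
    have h1 : HasDerivAt (fun κ : ℝ => κ/(2*(a^2+κ^2)))
        ((1*(2*(a^2+κ^2)) - κ*(2*(2*κ)))/(2*(a^2+κ^2))^2) κ :=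
      (hasDerivAt_id κ).div (d0.const_mul 2) (by positivity)
    have h3 : (0:ℝ) < 1 + (κ/a)^2 := by positivity
    refine (h2.sub h1).congr_deriv ?_
    field_simp
    ring
  have hpos : ∀ κ ∈ Ioi (0:ℝ), (0:ℝ) ≤ κ^2 * ((a^2+κ^2)^2)⁻¹ := fun κ _ => by positivity
  have hlim : Tendsto F atTop (nhds (π/(4*a))) := by
    have l2 : Tendsto (fun κ : ℝ => arctan (κ/a)/(2*a)) atTop (nhds ((π/2)/(2*a))) := by
      have ht : Tendsto (fun κ : ℝ => κ/a) atTop atTop := tendsto_id.atTop_div_const ha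
      exact ((tendsto_arctan_atTop.mono_right nhdsWithin_le_nhds).comp ht).div_const _
    have l1 : Tendsto (fun κ : ℝ => κ/(2*(a^2+κ^2))) atTop (nhds 0) := by
      have hb : Tendsto (fun κ : ℝ => 1 / (2*κ)) atTop (nhds 0) :=
        Tendsto.div_atTop tendsto_const_nhds
          (Tendsto.const_mul_atTop (by norm_num) tendsto_id)
      apply squeeze_zero' (g := fun κ : ℝ => 1 / (2*κ))
      · filter_upwards [eventually_gt_atTop (0:ℝ)] with κ hκ
        positivity
      · filter_upwards [eventually_gt_atTop (0:ℝ)] with κ hκ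
        rw [div_le_div_iff₀ (by positivity) (by positivity)]
        nlinarith [sq_nonneg a]
      · exact hb
    have := l2.sub l1
    convert this using 2
    ring
  refine ⟨integrableOn_Ioi_deriv_of_nonneg' hderiv hpos hlim, ?_⟩
  rw [integral_Ioi_of_hasDerivAt_of_nonneg' hderiv hpos hlim]
  norm_num [hF]

theorem cubeFTC :
    IntegrableOn (fun κ : ℝ => (2*κ^3)⁻¹) (Ioi 2) ∧
      (∫ κ in Ioi (2:ℝ), (2*κ^3)⁻¹) = 1/16 := by
  set F : ℝ → ℝ := fun κ => -(4*κ^2)⁻¹ with hF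
  have hderiv : ∀ κ ∈ Ici (2:ℝ), HasDerivAt F ((2*κ^3)⁻¹) κ := by
    intro κ hκ
    have hκ0 : (0:ℝ) < κ := lt_of_lt_of_le two_pos hκ
    have d0 : HasDerivAt (fun κ : ℝ => 4*κ^2) (4*(2*κ)) κ := by
      simpa using (hasDerivAt_pow 2 κ).const_mul 4
    have h1 : HasDerivAt (fun κ : ℝ => -(4*κ^2)⁻¹) (-(-(4*(2*κ)) * ((4*κ^2)^2)⁻¹)) κ :=
      (d0.inv (by positivity)).neg
    convert h1 using 1
    field_simp
    ring
  have hpos : ∀ κ ∈ Ioi (2:ℝ), (0:ℝ) ≤ (2*κ^3)⁻¹ := fun κ hκ => by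
    have : (0:ℝ) < κ := lt_trans two_pos hκ; positivity
  have hlim : Tendsto F atTop (nhds 0) := by
    rw [hF]
    have hb : Tendsto (fun κ : ℝ => 4*κ^2) atTop atTop :=
      Tendsto.const_mul_atTop (by norm_num) (tendsto_pow_atTop two_ne_zero)
    simpa using (hb.inv_tendsto_atTop).neg
  refine ⟨integrableOn_Ioi_deriv_of_nonneg' hderiv hpos hlim, ?_⟩
  rw [integral_Ioi_of_hasDerivAt_of_nonneg' hderiv hpos hlim]
  norm_num [hF]

noncomputable def rGSE (κ : ℝ) : ℝ := 1 - κ / 2 - Bgse κ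

theorem measurable_Bgse : Measurable Bgse := by
  unfold Bgse
  refine Measurable.ite (measurableSet_lt measurable_id measurable_const) ?_ measurable_const
  exact ((measurable_const.sub (measurable_id.div_const 2)).add
    ((measurable_id.div_const 4).mul (Real.measurable_log.comp
      ((measurable_const.sub measurable_id).abs))))

theorem measurable_rGSE : Measurable rGSE :=
  (measurable_const.sub (measurable_id.div_const 2)).sub measurable_Bgse

-- |log x| ≤ 2 / √x  for x ∈ [0,1]
theorem log_bound {x : ℝ} (h0 : 0 ≤ x) (h1 : x ≤ 1) : |Real.log x| ≤ 2 * (Real.sqrt x)⁻¹ := by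
  rcases eq_or_lt_of_le h0 with h | h
  · simp [← h]
  · have hlog : Real.log x ≤ 0 := Real.log_nonpos h0 h1
    rw [abs_of_nonpos hlog]
    have hs : 0 < Real.sqrt x := Real.sqrt_pos.mpr h
    have key : Real.log (Real.sqrt x)⁻¹ ≤ (Real.sqrt x)⁻¹ - 1 :=
      Real.log_le_sub_one_of_pos (by positivity)
    have : -Real.log x = 2 * Real.log (Real.sqrt x)⁻¹ := by
      rw [Real.log_inv, Real.log_sqrt h0]; ring
    rw [this]
    nlinarith [inv_nonneg.mpr (Real.sqrt_nonneg x)]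

-- −log(1−κ) ≤ 2κ for κ ∈ [0,1/2]
theorem log_small_bound {κ : ℝ} (h0 : 0 ≤ κ) (h1 : κ ≤ 1/2) : -Real.log (1 - κ) ≤ 2*κ := by
  have hpos : 0 < 1 - κ := by linarith
  have : Real.log (1-κ)⁻¹ ≤ (1-κ)⁻¹ - 1 := Real.log_le_sub_one_of_pos (by positivity)
  rw [Real.log_inv] at this
  have h2 : (1-κ)⁻¹ - 1 = κ / (1-κ) := by field_simp; ring
  have h3 : κ / (1-κ) ≤ 2*κ := by
    rw [div_le_iff₀ hpos]
    nlinarith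
  linarith

theorem rpow_neg_half {x : ℝ} (hx : 0 ≤ x) : x ^ (-(2:ℝ)⁻¹) = (Real.sqrt x)⁻¹ := by
  rw [Real.rpow_neg hx, Real.sqrt_eq_rpow]
  norm_num

theorem integrableOn_Msqrt :
    IntegrableOn (fun κ : ℝ => 16 * (Real.sqrt |1 - κ|)⁻¹) (Ioc (1/2 : ℝ) 2) := by
  have h0 : IntervalIntegrable (fun x : ℝ => x ^ (-(2:ℝ)⁻¹)) volume 0 1 :=
    intervalIntegral.intervalIntegrable_rpow' (by norm_num)
  have hL : IntegrableOn (fun κ : ℝ => (Real.sqrt |1 - κ|)⁻¹) (Ioc (1/2 : ℝ) 1) := by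
    have h1 : IntervalIntegrable (fun x : ℝ => (1 - x) ^ (-(2:ℝ)⁻¹)) volume 0 1 := by
      simpa using (h0.comp_sub_left 1).symm
    have h2 : IntegrableOn (fun x : ℝ => (1 - x) ^ (-(2:ℝ)⁻¹)) (Ioc (0:ℝ) 1) :=
      (intervalIntegrable_iff_integrableOn_Ioc_of_le (by norm_num)).mp h1
    refine IntegrableOn.congr_fun (h2.mono_set (Ioc_subset_Ioc (by norm_num) le_rfl)) ?_
      measurableSet_Ioc
    intro κ hκ
    have h1κ : 0 ≤ 1 - κ := by linarith [hκ.2]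
    show (1 - κ) ^ (-(2:ℝ)⁻¹) = (Real.sqrt |1 - κ|)⁻¹
    rw [abs_of_nonneg h1κ, rpow_neg_half h1κ]
  have hR : IntegrableOn (fun κ : ℝ => (Real.sqrt |1 - κ|)⁻¹) (Ioc (1:ℝ) 2) := by
    have h1 : IntervalIntegrable (fun x : ℝ => (x - 1) ^ (-(2:ℝ)⁻¹)) volume 1 2 := by
      have h := h0.comp_sub_right 1
      have e1 : (0:ℝ) + 1 = 1 := by norm_num
      have e2 : (1:ℝ) + 1 = 2 := by norm_num
      rwa [e1, e2] at h
    have h2 : IntegrableOn (fun x : ℝ => (x - 1) ^ (-(2:ℝ)⁻¹)) (Ioc (1:ℝ) 2) :=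
      (intervalIntegrable_iff_integrableOn_Ioc_of_le (by norm_num)).mp h1
    refine IntegrableOn.congr_fun h2 ?_ measurableSet_Ioc
    intro κ hκ
    have h1κ : 0 ≤ κ - 1 := by linarith [hκ.1.le]
    show (κ - 1) ^ (-(2:ℝ)⁻¹) = (Real.sqrt |1 - κ|)⁻¹
    rw [abs_of_nonpos (by linarith : 1 - κ ≤ 0), neg_sub, rpow_neg_half h1κ]
  have := (hL.union hR).const_mul (16:ℝ)
  rwa [Set.Ioc_union_Ioc_eq_Ioc (by norm_num) (by norm_num)] at this

theorem wFTC {a : ℝ} (ha : 0 < a) :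
    IntegrableOn (fun κ : ℝ => ((a^2+κ^2)^2)⁻¹) (Ioi 0) ∧
      (∫ κ in Ioi (0:ℝ), ((a^2+κ^2)^2)⁻¹) = π/(4*a^3) := by
  set F : ℝ → ℝ := fun κ => κ/(2*a^2*(a^2+κ^2)) + arctan (κ/a)/(2*a^3) with hF
  have ha2 : a ≠ 0 := ne_of_gt ha
  have hderiv : ∀ κ ∈ Ici (0:ℝ), HasDerivAt F (((a^2+κ^2)^2)⁻¹) κ := by
    intro κ _
    have hd : 0 < a^2 + κ^2 := by positivity
    have d0 : HasDerivAt (fun κ : ℝ => a^2 + κ^2) (2*κ) κ := by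
      simpa using (hasDerivAt_pow 2 κ).const_add (a^2)
    have h1 : HasDerivAt (fun κ : ℝ => κ/(2*a^2*(a^2+κ^2)))
        ((1*(2*a^2*(a^2+κ^2)) - κ*(2*a^2*(2*κ)))/(2*a^2*(a^2+κ^2))^2) κ :=
      (hasDerivAt_id κ).div (d0.const_mul (2*a^2)) (by positivity)
    have h2 : HasDerivAt (fun κ : ℝ => arctan (κ/a)/(2*a^3))
        ((1/(1+(κ/a)^2) * (1/a))/(2*a^3)) κ :=
      (((hasDerivAt_arctan (κ/a)).comp κ ((hasDerivAt_id κ).div_const a))).div_const (2*a^3)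
    have h3 : (0:ℝ) < 1 + (κ/a)^2 := by positivity
    refine (h1.add h2).congr_deriv ?_
    field_simp
    ring
  have hpos : ∀ κ ∈ Ioi (0:ℝ), (0:ℝ) ≤ ((a^2+κ^2)^2)⁻¹ := fun κ _ => by positivity
  have hlim : Tendsto F atTop (nhds (π/(4*a^3))) := by
    have l1 : Tendsto (fun κ : ℝ => κ/(2*a^2*(a^2+κ^2))) atTop (nhds 0) := by
      have hb : Tendsto (fun κ : ℝ => 1 / (2*a^2*κ)) atTop (nhds 0) :=
        Tendsto.div_atTop tendsto_const_nhds
          (Tendsto.const_mul_atTop (by positivity) tendsto_id)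
      apply squeeze_zero' (g := fun κ : ℝ => 1 / (2*a^2*κ))
      · filter_upwards [eventually_gt_atTop (0:ℝ)] with κ hκ
        positivity
      · filter_upwards [eventually_gt_atTop (0:ℝ)] with κ hκ
        rw [div_le_div_iff₀ (by positivity) (by positivity)]
        nlinarith [sq_nonneg a, sq_nonneg κ, sq_nonneg (a*κ)]
      · exact hb
    have l2 : Tendsto (fun κ : ℝ => arctan (κ/a)/(2*a^3)) atTop (nhds ((π/2)/(2*a^3))) := by
      have ht : Tendsto (fun κ : ℝ => κ/a) atTop atTop := tendsto_id.atTop_div_const ha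
      exact ((tendsto_arctan_atTop.mono_right nhdsWithin_le_nhds).comp ht).div_const _
    have := l1.add l2
    convert this using 2
    ring
  refine ⟨integrableOn_Ioi_deriv_of_nonneg' hderiv hpos hlim, ?_⟩
  rw [integral_Ioi_of_hasDerivAt_of_nonneg' hderiv hpos hlim]
  norm_num [hF]

-- Pointwise bounds on rGSE
theorem rGSE_small {κ : ℝ} (h0 : 0 < κ) (h1 : κ ≤ 1/2) : |rGSE κ| ≤ κ^2 := by
  have h2 : κ < 2 := by linarith
  have hr : rGSE κ = -((κ/4) * Real.log |1 - κ|) := by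
    unfold rGSE Bgse
    rw [if_pos h2]; ring
  have habs : |1 - κ| = 1 - κ := abs_of_nonneg (by linarith)
  have hlogle : Real.log (1 - κ) ≤ 0 := Real.log_nonpos (by linarith) (by linarith)
  have hlb : -Real.log (1 - κ) ≤ 2*κ := log_small_bound h0.le h1
  rw [hr, habs, abs_neg, abs_mul, abs_of_nonneg (by positivity : (0:ℝ) ≤ κ/4),
    abs_of_nonpos hlogle]
  nlinarith

theorem rGSE_mid {κ : ℝ} (h0 : 1/2 < κ) (h1 : κ ≤ 2) : |rGSE κ| ≤ (Real.sqrt |1 - κ|)⁻¹ := by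
  rcases lt_or_ge κ 2 with h2 | h2
  · have hr : rGSE κ = -((κ/4) * Real.log |1 - κ|) := by
      unfold rGSE Bgse
      rw [if_pos h2]; ring
    have habs : |1 - κ| ≤ 1 := by
      rw [abs_le]; constructor <;> linarith
    have hb := log_bound (abs_nonneg (1 - κ)) habs
    rw [hr, abs_neg, abs_mul, abs_of_nonneg (by positivity : (0:ℝ) ≤ κ/4)]
    have hsq : 0 ≤ (Real.sqrt |1 - κ|)⁻¹ := by positivity
    nlinarith [abs_nonneg (Real.log |1 - κ|)]
  · have hκ2 : κ = 2 := le_antisymm h1 h2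
    have : rGSE κ = 0 := by
      unfold rGSE Bgse
      rw [if_neg (by rw [hκ2]; norm_num), hκ2]; norm_num
    rw [this]
    simp

theorem rGSE_large {κ : ℝ} (h2 : 2 ≤ κ) : |rGSE κ| ≤ κ/2 := by
  have hr : rGSE κ = 1 - κ/2 := by
    unfold rGSE Bgse
    rw [if_neg (by linarith)]; ring
  rw [hr, abs_of_nonpos (by linarith)]
  linarith

noncomputable def Cmid : ℝ := ∫ κ in Ioc (1/2 : ℝ) 2, 16 * (Real.sqrt |1 - κ|)⁻¹

theorem Jbound {a : ℝ} (ha : 0 < a) :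
    IntegrableOn (fun κ : ℝ => rGSE κ * ((a^2+κ^2)^2)⁻¹) (Ioi 0) ∧
      |∫ κ in Ioi (0:ℝ), rGSE κ * ((a^2+κ^2)^2)⁻¹| ≤ π/(4*a) + Cmid + 1/16 := by
  set f : ℝ → ℝ := fun κ => rGSE κ * ((a^2+κ^2)^2)⁻¹ with hf
  have hm : Measurable f :=
    measurable_rGSE.mul (((measurable_const.add (measurable_id.pow_const 2)).pow_const 2).inv)
  have hwnn : ∀ κ : ℝ, (0:ℝ) ≤ ((a^2+κ^2)^2)⁻¹ := fun κ => by positivity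
  have hnormf : ∀ κ : ℝ, ‖f κ‖ = |rGSE κ| * ((a^2+κ^2)^2)⁻¹ := by
    intro κ
    rw [hf, Real.norm_eq_abs, abs_mul, abs_of_nonneg (hwnn κ)]
  -- bounds on the three regions
  have hb1 : ∀ κ ∈ Ioc (0:ℝ) (1/2), ‖f κ‖ ≤ κ^2 * ((a^2+κ^2)^2)⁻¹ := by
    intro κ hκ
    rw [hnormf]
    exact mul_le_mul_of_nonneg_right (rGSE_small hκ.1 hκ.2) (hwnn κ)
  have hb2 : ∀ κ ∈ Ioc (1/2:ℝ) 2, ‖f κ‖ ≤ 16 * (Real.sqrt |1 - κ|)⁻¹ := by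
    intro κ hκ
    rw [hnormf]
    have hw : ((a^2+κ^2)^2)⁻¹ ≤ 16 := by
      rw [inv_le_comm₀ (by positivity) (by norm_num)]
      have hk2 : (1/4:ℝ) ≤ a^2 + κ^2 := by nlinarith [sq_nonneg a, hκ.1]
      nlinarith [hk2]
    calc |rGSE κ| * ((a^2+κ^2)^2)⁻¹ ≤ (Real.sqrt |1 - κ|)⁻¹ * 16 :=
          mul_le_mul (rGSE_mid hκ.1 hκ.2) hw (hwnn κ) (by positivity)
      _ = 16 * (Real.sqrt |1 - κ|)⁻¹ := by ring
  have hb3 : ∀ κ ∈ Ioi (2:ℝ), ‖f κ‖ ≤ (2*κ^3)⁻¹ := by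
    intro κ hκ
    have hκ0 : (0:ℝ) < κ := lt_trans two_pos hκ
    rw [hnormf]
    have hw : ((a^2+κ^2)^2)⁻¹ ≤ (κ^4)⁻¹ := by
      apply inv_anti₀ (by positivity)
      nlinarith [sq_nonneg a, sq_nonneg (a*κ)]
    calc |rGSE κ| * ((a^2+κ^2)^2)⁻¹ ≤ (κ/2) * (κ^4)⁻¹ :=
          mul_le_mul (rGSE_large (le_of_lt hκ)) hw (hwnn κ) (by positivity)
      _ = (2*κ^3)⁻¹ := by field_simp
  -- integrability on pieces
  have i1 : IntegrableOn f (Ioc (0:ℝ) (1/2)) := by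
    refine Integrable.mono' ((k2wFTC ha).1.mono_set Ioc_subset_Ioi_self)
      hm.aestronglyMeasurable.restrict ?_
    rw [ae_restrict_iff' measurableSet_Ioc]
    exact Filter.Eventually.of_forall hb1
  have i2 : IntegrableOn f (Ioc (1/2:ℝ) 2) := by
    refine Integrable.mono' integrableOn_Msqrt hm.aestronglyMeasurable.restrict ?_
    rw [ae_restrict_iff' measurableSet_Ioc]
    exact Filter.Eventually.of_forall hb2
  have i3 : IntegrableOn f (Ioi (2:ℝ)) := by
    refine Integrable.mono' cubeFTC.1 hm.aestronglyMeasurable.restrict ?_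
    rw [ae_restrict_iff' measurableSet_Ioi]
    exact Filter.Eventually.of_forall hb3
  have hset1 : Ioc (1/2:ℝ) 2 ∪ Ioi 2 = Ioi (1/2) := Set.Ioc_union_Ioi_eq_Ioi (by norm_num)
  have hset : Ioc (0:ℝ) (1/2) ∪ (Ioc (1/2:ℝ) 2 ∪ Ioi 2) = Ioi 0 := by
    rw [hset1]
    exact Set.Ioc_union_Ioi_eq_Ioi (by norm_num)
  have d2 : Disjoint (Ioc (1/2:ℝ) 2) (Ioi 2) := by
    rw [Set.disjoint_left]
    intro x hx hx'
    exact absurd hx' (not_lt.mpr hx.2)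
  have d1 : Disjoint (Ioc (0:ℝ) (1/2)) (Ioc (1/2:ℝ) 2 ∪ Ioi 2) := by
    rw [hset1, Set.disjoint_left]
    intro x hx hx'
    exact absurd hx' (not_lt.mpr hx.2)
  have iu : IntegrableOn f (Ioi 0) := by
    rw [← hset]
    exact (i1.union (i2.union i3))
  refine ⟨iu, ?_⟩
  have habs : |∫ κ in Ioi (0:ℝ), f κ| ≤ ∫ κ in Ioi (0:ℝ), |f κ| := by
    simpa [Real.norm_eq_abs] using
      MeasureTheory.norm_integral_le_integral_norm (μ := volume.restrict (Ioi (0:ℝ))) f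
  have i1a : IntegrableOn (fun κ => |f κ|) (Ioc (0:ℝ) (1/2)) := i1.abs
  have i2a : IntegrableOn (fun κ => |f κ|) (Ioc (1/2:ℝ) 2) := i2.abs
  have i3a : IntegrableOn (fun κ => |f κ|) (Ioi (2:ℝ)) := i3.abs
  have split : (∫ κ in Ioi (0:ℝ), |f κ|) =
      (∫ κ in Ioc (0:ℝ) (1/2), |f κ|) + ((∫ κ in Ioc (1/2:ℝ) 2, |f κ|)
        + (∫ κ in Ioi (2:ℝ), |f κ|)) := by
    rw [← hset, setIntegral_union d1 (by rw [hset1]; exact measurableSet_Ioi) i1a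
      (i2a.union i3a), setIntegral_union d2 measurableSet_Ioi i2a i3a]
  have e1 : (∫ κ in Ioc (0:ℝ) (1/2), |f κ|) ≤ π/(4*a) := by
    have step1 : (∫ κ in Ioc (0:ℝ) (1/2), |f κ|) ≤
        ∫ κ in Ioc (0:ℝ) (1/2), κ^2 * ((a^2+κ^2)^2)⁻¹ := by
      refine setIntegral_mono_on i1a ((k2wFTC ha).1.mono_set Ioc_subset_Ioi_self)
        measurableSet_Ioc ?_
      intro κ hκ
      simpa [Real.norm_eq_abs] using hb1 κ hκ
    have step2 : (∫ κ in Ioc (0:ℝ) (1/2), κ^2 * ((a^2+κ^2)^2)⁻¹) ≤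
        ∫ κ in Ioi (0:ℝ), κ^2 * ((a^2+κ^2)^2)⁻¹ := by
      refine setIntegral_mono_set (k2wFTC ha).1 ?_ (HasSubset.Subset.eventuallyLE
        Ioc_subset_Ioi_self)
      filter_upwards with κ
      positivity
    rw [(k2wFTC ha).2] at step2
    linarith
  have e2 : (∫ κ in Ioc (1/2:ℝ) 2, |f κ|) ≤ Cmid := by
    refine setIntegral_mono_on i2a integrableOn_Msqrt measurableSet_Ioc ?_
    intro κ hκ
    simpa [Real.norm_eq_abs] using hb2 κ hκ
  have e3 : (∫ κ in Ioi (2:ℝ), |f κ|) ≤ 1/16 := by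
    have := setIntegral_mono_on i3a cubeFTC.1 measurableSet_Ioi ?_
    · rw [cubeFTC.2] at this; exact this
    · intro κ hκ
      simpa [Real.norm_eq_abs] using hb3 κ hκ
  calc |∫ κ in Ioi (0:ℝ), f κ| ≤ ∫ κ in Ioi (0:ℝ), |f κ| := habs
    _ = _ := split
    _ ≤ π/(4*a) + Cmid + 1/16 := by linarith

theorem change_of_var {L t : ℝ} (hL : 0 < L) (ht : 0 < t) :
    (∫ u in (0:ℝ)..4, L * rhoMP u * Bgse (t / (2 * Real.pi * rhoMP u * L))) =
      ∫ κ in Ioi (0:ℝ), (4*L*(t/L)^3/π) * (Bgse κ * (((t/L)^2+κ^2)^2)⁻¹) := by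
  set a : ℝ := t / L with haDef
  have ha : 0 < a := div_pos ht hL
  have hat : L * a = t := by rw [haDef]; field_simp
  have hπ : (0:ℝ) < π := Real.pi_pos
  set φ : ℝ → ℝ := fun κ => 4*κ^2/(a^2+κ^2) with hφ
  set φ' : ℝ → ℝ := fun κ => 8*a^2*κ/(a^2+κ^2)^2 with hφ'
  set g : ℝ → ℝ := fun u => L * rhoMP u * Bgse (t / (2 * Real.pi * rhoMP u * L)) with hg
  have hc : ∀ κ : ℝ, 0 < a^2 + κ^2 := fun κ => by positivity
  -- image
  have hImg : φ '' Ioi 0 = Ioo 0 4 := by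
    ext u
    constructor
    · rintro ⟨κ, hκ, rfl⟩
      have hκ0 : (0:ℝ) < κ := hκ
      constructor
      · show 0 < 4*κ^2/(a^2+κ^2); positivity
      · show 4*κ^2/(a^2+κ^2) < 4
        rw [div_lt_iff₀ (hc κ)]
        nlinarith [sq_nonneg a]
    · rintro ⟨hu0, hu4⟩
      have h4u : (0:ℝ) < 4 - u := by linarith
      refine ⟨a * Real.sqrt u / Real.sqrt (4-u), ?_, ?_⟩
      · have : 0 < Real.sqrt u := Real.sqrt_pos.mpr hu0
        have : 0 < Real.sqrt (4-u) := Real.sqrt_pos.mpr h4u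
        show 0 < a * Real.sqrt u / Real.sqrt (4-u)
        positivity
      · have hs2 : (a * Real.sqrt u / Real.sqrt (4-u))^2 = a^2*u/(4-u) := by
          rw [div_pow, mul_pow, Real.sq_sqrt hu0.le, Real.sq_sqrt h4u.le]
        show 4*(a * Real.sqrt u / Real.sqrt (4-u))^2/(a^2+(a * Real.sqrt u / Real.sqrt (4-u))^2) = u
        rw [hs2]
        have ha' : a ≠ 0 := ne_of_gt ha
        have h4u' : (4:ℝ) - u ≠ 0 := ne_of_gt h4u
        field_simp
        ring
  -- injectivity
  have hInj : InjOn φ (Ioi 0) := by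
    apply StrictMonoOn.injOn
    intro x hx y hy hxy
    have hx0 : (0:ℝ) < x := hx
    show 4*x^2/(a^2+x^2) < 4*y^2/(a^2+y^2)
    rw [div_lt_div_iff₀ (hc x) (hc y)]
    nlinarith [mul_pos (mul_pos (sub_pos.mpr hxy) (by linarith : (0:ℝ) < x + y))
      (pow_pos ha 2)]
  -- derivative
  have hDeriv : ∀ κ ∈ Ioi (0:ℝ), HasDerivWithinAt φ (φ' κ) (Ioi 0) κ := by
    intro κ _
    have d0 : HasDerivAt (fun κ : ℝ => a^2 + κ^2) (2*κ) κ := by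
      simpa using (hasDerivAt_pow 2 κ).const_add (a^2)
    have hnum : HasDerivAt (fun κ : ℝ => 4*κ^2) (4*(2*κ)) κ := by
      simpa using (hasDerivAt_pow 2 κ).const_mul 4
    have h := hnum.div d0 (ne_of_gt (hc κ))
    have h2 : HasDerivAt φ (φ' κ) κ := by
      refine h.congr_deriv ?_
      rw [hφ']
      field_simp
      ring
    exact h2.hasDerivWithinAt
  have key := MeasureTheory.integral_image_eq_integral_abs_deriv_smul
    measurableSet_Ioi hDeriv hInj g
  rw [hImg] at key
  have hLHS : (∫ u in (0:ℝ)..4, g u) = ∫ u in Ioo (0:ℝ) 4, g u := by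
    rw [intervalIntegral.integral_of_le (by norm_num : (0:ℝ) ≤ 4),
      MeasureTheory.integral_Ioc_eq_integral_Ioo]
  rw [hLHS, key]
  apply setIntegral_congr_fun measurableSet_Ioi
  intro κ hκ
  have hκ0 : (0:ℝ) < κ := hκ
  have hcκ := hc κ
  -- compute rhoMP (φ κ)
  have h4 : 4 - φ κ = 4*a^2/(a^2+κ^2) := by
    rw [hφ]
    field_simp
    ring
  have hu : φ κ * (4 - φ κ) = (4*a*κ/(a^2+κ^2))^2 := by
    rw [h4, hφ]
    field_simp
  have hsqrt : Real.sqrt (φ κ * (4 - φ κ)) = 4*a*κ/(a^2+κ^2) := by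
    rw [hu, Real.sqrt_sq (by positivity)]
  have hφκ : φ κ = 4*κ^2/(a^2+κ^2) := rfl
  have hrho : rhoMP (φ κ) = a/(2*π*κ) := by
    unfold rhoMP
    rw [hsqrt, hφκ]
    field_simp
  have harg : t / (2 * Real.pi * rhoMP (φ κ) * L) = κ := by
    rw [hrho, ← hat]
    field_simp
  have hφ'pos : 0 ≤ φ' κ := by rw [hφ']; positivity
  show |φ' κ| • g (φ κ) = (4*L*a^3/π) * (Bgse κ * ((a^2+κ^2)^2)⁻¹)
  rw [abs_of_nonneg hφ'pos, smul_eq_mul, hg]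
  simp only
  rw [harg, hrho, hφ']
  field_simp
  ring


noncomputable def Jfun (a : ℝ) : ℝ := ∫ κ in Ioi (0:ℝ), rGSE κ * ((a^2+κ^2)^2)⁻¹

theorem main_eq {L t : ℝ} (hL : 0 < L) (ht : 0 < t) :
    (1 / t) * (L - ∫ u in (0:ℝ)..4, L * rhoMP u * Bgse (t / (2 * Real.pi * rhoMP u * L)))
      = 1/π + (4*(t/L)^2/π) * Jfun (t/L) := by
  set a : ℝ := t / L with haDef
  have ha : 0 < a := div_pos ht hL
  have hat : L * a = t := by rw [haDef]; field_simp
  have hπ : (0:ℝ) < π := Real.pi_pos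
  rw [change_of_var hL ht]
  have hsplit : (∫ κ in Ioi (0:ℝ), (4*L*a^3/π) * (Bgse κ * ((a^2+κ^2)^2)⁻¹))
      = (4*L*a^3/π) * (π/(4*a^3) - (1/2) * (1/(2*a^2)) - Jfun a) := by
    rw [MeasureTheory.integral_const_mul]
    congr 1
    have hcongr : ∀ κ : ℝ, Bgse κ * ((a^2+κ^2)^2)⁻¹
        = ((a^2+κ^2)^2)⁻¹ - (1/2) * (κ * ((a^2+κ^2)^2)⁻¹) - rGSE κ * ((a^2+κ^2)^2)⁻¹ := by
      intro κ
      have : Bgse κ = 1 - κ/2 - rGSE κ := by unfold rGSE; ring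
      rw [this]; ring
    rw [integral_congr_ae (Filter.Eventually.of_forall fun κ => hcongr κ)]
    have iW := (wFTC ha).1
    have iK : Integrable (fun κ : ℝ => 1/2 * (κ * ((a^2+κ^2)^2)⁻¹))
        (volume.restrict (Ioi 0)) := (kwFTC ha).1.const_mul (1/2)
    have iR := (Jbound ha).1
    have iWK : Integrable (fun κ : ℝ => ((a^2+κ^2)^2)⁻¹ - 1/2 * (κ * ((a^2+κ^2)^2)⁻¹))
        (volume.restrict (Ioi 0)) := iW.sub iK
    rw [MeasureTheory.integral_sub iWK iR, MeasureTheory.integral_sub iW iK,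
      MeasureTheory.integral_const_mul, (wFTC ha).2, (kwFTC ha).2]
    rfl
  rw [hsplit, ← hat]
  have hL' : L ≠ 0 := ne_of_gt hL
  have ha' : a ≠ 0 := ne_of_gt ha
  have hπ' : π ≠ 0 := ne_of_gt hπ
  field_simp
  ring

/-- Early-time slope of the refined connected two-point form factor of the LSE:
`lim_{t→0⁺} (1/t)(L − ∫₀⁴ Lρ(u) B(t/(2πρ(u)L)) du) = 1/π`. -/
theorem lse_refined_form_factor_slope (L : ℝ) (hL : 0 < L) :
    Tendsto (fun t : ℝ =>
        (1 / t) * (L - ∫ u in (0:ℝ)..4, L * rhoMP u * Bgse (t / (2 * Real.pi * rhoMP u * L))))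
      (nhdsWithin 0 (Set.Ioi 0)) (nhds (1 / Real.pi)) := by
  have hπ : (0:ℝ) < π := Real.pi_pos
  set err : ℝ → ℝ := fun t => (4*(t/L)^2/π) * Jfun (t/L) with herr
  have heq : ∀ᶠ t in nhdsWithin (0:ℝ) (Set.Ioi 0),
      (1 / t) * (L - ∫ u in (0:ℝ)..4, L * rhoMP u * Bgse (t / (2 * Real.pi * rhoMP u * L)))
        = 1/π + err t := by
    filter_upwards [self_mem_nhdsWithin] with t ht
    exact main_eq hL ht
  have herrlim : Tendsto err (nhdsWithin 0 (Set.Ioi 0)) (nhds 0) := by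
    apply squeeze_zero_norm' (a := fun t : ℝ => (t/L) + (4/π)*(Cmid+1/16)*(t/L)^2)
    · filter_upwards [self_mem_nhdsWithin] with t ht
      have htpos : (0:ℝ) < t := ht
      have ha : 0 < t/L := div_pos htpos hL
      have hJ := (Jbound ha).2
      have hnn : (0:ℝ) ≤ 4*(t/L)^2/π := by positivity
      rw [herr]
      simp only [Real.norm_eq_abs, abs_mul, abs_of_nonneg hnn]
      calc (4*(t/L)^2/π) * |Jfun (t/L)| ≤ (4*(t/L)^2/π) * (π/(4*(t/L)) + Cmid + 1/16) :=
            mul_le_mul_of_nonneg_left hJ hnn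
        _ = (t/L) + (4/π)*(Cmid+1/16)*(t/L)^2 := by
            field_simp
            ring
    · have hcont : Continuous (fun t : ℝ => (t/L) + (4/π)*(Cmid+1/16)*(t/L)^2) := by
        fun_prop
      have := (hcont.tendsto 0).mono_left (nhdsWithin_le_nhds (s := Set.Ioi (0:ℝ)))
      simpa using this
  have : Tendsto (fun t : ℝ => 1/π + err t) (nhdsWithin 0 (Set.Ioi 0)) (nhds (1/π)) := by
    have := (tendsto_const_nhds (x := (1:ℝ)/π)
      (f := nhdsWithin (0:ℝ) (Set.Ioi 0))).add herrlim
    simpa using this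
  exact this.congr' (heq.mono fun _ h => h.symm)
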